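/- Let A be a finite nonempty set with |A| = d, and for each n ≥ 1 let ν_n be a Borel probability measure on A^ℤ (with the product topology and the product σ-algebra) that is invariant under the left shift S. Then there exist r with 2 ≤ r ≤ d + 1 and a finite word ω = ω_0 ω_1 ⋯ ω_{r-1} over A with ω_0 = ω_{r-1} such that limsup_{n→∞} ν_n([ω]) > 0, where [ω] = { x ∈ A^ℤ : x_i = ω_i for 0 ≤ i ≤ r-1 } is the cylinder set determined by ω. -/

import Mathlib

open Filter MeasureTheory Topology

/-- Given shift-invariant Borel probability measures `ν_n` on `A^ℤ`
(with `A` finite, carrying the discrete σ-algebra, and `A^ℤ` the product σ-algebra),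
there exist `r` with `2 ≤ r ≤ |A| + 1` and a word `ω_0 ⋯ ω_{r-1}` with
`ω_0 = ω_{r-1}` such that `limsup_n ν_n([ω]) > 0`. -/
theorem stmt17 {A : Type*} [Fintype A] [Nonempty A]
    [MeasurableSpace A] [MeasurableSingletonClass A]
    (ν : ℕ → Measure (ℤ → A))
    (hprob : ∀ n, IsProbabilityMeasure (ν n))
    (hinv : ∀ n (E : Set (ℤ → A)), MeasurableSet E →
      ν n ((fun x (i : ℤ) => x (i + 1)) ⁻¹' E) = ν n E) :
    ∃ r : ℕ, 2 ≤ r ∧ r ≤ Fintype.card A + 1 ∧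
      ∃ ω : ℕ → A, ω 0 = ω (r - 1) ∧
        0 < limsup (fun n => ν n {x : ℤ → A | ∀ i : ℕ, i < r → x (i : ℤ) = ω i})
              atTop := by
  classical
  set d := Fintype.card A with hd
  set T : (ℤ → A) → (ℤ → A) := fun x i => x (i + 1) with hT
  have hTmeas : Measurable T := measurable_pi_lambda _ fun i => measurable_pi_apply (i + 1)
  -- iterated shift invariance
  have hinv' : ∀ n m (E : Set (ℤ → A)), MeasurableSet E →
      ν n (T^[m] ⁻¹' E) = ν n E := by
    intro n m
    induction m with
    | zero => intro E _; simp
    | succ m ih =>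
      intro E hE
      rw [Function.iterate_succ']
      have : (T ∘ T^[m]) ⁻¹' E = T^[m] ⁻¹' (T ⁻¹' E) := rfl
      rw [this, ih _ (hTmeas hE)]
      exact hinv n E hE
  -- iterate formula
  have hTit : ∀ (m : ℕ) (x : ℤ → A) (i : ℤ), T^[m] x i = x (i + m) := by
    intro m
    induction m with
    | zero => intro x i; simp
    | succ m ih =>
      intro x i
      rw [Function.iterate_succ, Function.comp_apply, ih]
      simp [hT]
      ring_nf
  -- cylinders of length d+1
  set C : (Fin (d + 1) → A) → Set (ℤ → A) :=
    fun v => {x | ∀ i : Fin (d + 1), x ((i : ℕ) : ℤ) = v i} with hC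
  have hCmeas : ∀ v, MeasurableSet (C v) := by
    intro v
    have : C v = ⋂ i : Fin (d + 1), (fun x : ℤ → A => x ((i : ℕ) : ℤ)) ⁻¹' {v i} := by
      ext x; simp [hC, Set.mem_iInter]
    rw [this]
    exact MeasurableSet.iInter fun i => (measurable_pi_apply _) (measurableSet_singleton _)
  have hsum : ∀ n, ∑ v : Fin (d + 1) → A, ν n (C v) = 1 := by
    intro n
    have hdisj : Pairwise (Function.onFun Disjoint C) := by
      intro v w hvw
      rw [Function.onFun, Set.disjoint_left]
      intro x hx hx'
      apply hvw
      funext i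
      rw [← hx i, ← hx' i]
    have := measure_iUnion (μ := ν n) hdisj hCmeas
    have huniv : (⋃ v, C v) = Set.univ := by
      ext x
      simp only [Set.mem_iUnion, Set.mem_univ, iff_true]
      exact ⟨fun i => x ((i : ℕ) : ℤ), fun i => rfl⟩
    rw [huniv] at this
    rw [← tsum_fintype (L := SummationFilter.unconditional _), ← this, measure_univ]
  -- some cylinder has positive limsup
  have hex : ∃ v : Fin (d + 1) → A, 0 < limsup (fun n => ν n (C v)) atTop := by
    by_contra h
    push_neg at h
    have h0 : ∀ v, Tendsto (fun n => ν n (C v)) atTop (𝓝 0) := by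
      intro v
      have h1 : limsup (fun n => ν n (C v)) atTop ≤ 0 := h v
      exact tendsto_of_le_liminf_of_limsup_le (le_liminf_of_le (by isBoundedDefault)
        (Eventually.of_forall fun n => zero_le)) h1
    have hsum0 : Tendsto (fun n => ∑ v : Fin (d + 1) → A, ν n (C v)) atTop (𝓝 0) := by
      have := tendsto_finset_sum (Finset.univ : Finset (Fin (d + 1) → A))
        (fun v _ => h0 v)
      simpa using this
    have hone : Tendsto (fun n => ∑ v : Fin (d + 1) → A, ν n (C v)) atTop (𝓝 1) := by
      simp only [hsum]
      exact tendsto_const_nhds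
    exact one_ne_zero (tendsto_nhds_unique hone hsum0)
  obtain ⟨v, hv⟩ := hex
  -- pigeonhole
  obtain ⟨a, b, hab, hvab⟩ := Fintype.exists_ne_map_eq_of_card_lt v (by simp [hd])
  -- wlog a < b
  wlog hlt : (a : ℕ) < (b : ℕ) generalizing a b
  · have hne : (a : ℕ) ≠ (b : ℕ) := fun h => hab (Fin.ext h)
    exact this b a hab.symm hvab.symm (by omega)
  · set j := (a : ℕ) with hj
    set k := (b : ℕ) with hk
    have hkd : k < d + 1 := b.isLt
    have hjd : j < d + 1 := a.isLt
    set r := k - j + 1 with hr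
    set ω : ℕ → A := fun i => if h : j + i < d + 1 then v ⟨j + i, h⟩ else v a with hω
    refine ⟨r, by omega, by omega, ω, ?_, ?_⟩
    · -- ω 0 = ω (r-1)
      have h0 : ω 0 = v a := by
        rw [hω]
        simp only
        rw [dif_pos (by omega : j + 0 < d + 1)]
        have : (⟨j + 0, by omega⟩ : Fin (d + 1)) = a := Fin.ext (by simp [hj])
        rw [this]
      have h1 : ω (r - 1) = v b := by
        have hkj : r - 1 = k - j := by omega
        rw [hω]
        simp only [hkj]
        rw [dif_pos (by omega : j + (k - j) < d + 1)]
        have : (⟨j + (k - j), by omega⟩ : Fin (d + 1)) = b := by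
          apply Fin.ext
          simp only
          rw [← hk]
          omega
        rw [this]
      rw [h0, h1, hvab]
    · set Ω : Set (ℤ → A) := {x | ∀ i : ℕ, i < r → x ((i : ℕ) : ℤ) = ω i} with hΩ
      have hΩmeas : MeasurableSet Ω := by
        have : Ω = ⋂ i ∈ Finset.range r, (fun x : ℤ → A => x ((i : ℕ) : ℤ)) ⁻¹' {ω i} := by
          ext x; simp [hΩ, Set.mem_iInter]
        rw [this]
        exact MeasurableSet.biInter (Set.to_countable _)
          fun i _ => (measurable_pi_apply _) (measurableSet_singleton _)
      have hsub : ∀ n, ν n (C v) ≤ ν n Ω := by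
        intro n
        have hincl : C v ⊆ T^[j] ⁻¹' Ω := by
          intro x hx
          intro i hi
          have hij : j + i < d + 1 := by omega
          have hx' := hx ⟨j + i, hij⟩
          rw [hTit]
          have hcast : ((i : ℕ) : ℤ) + (j : ℤ) = (((j + i : ℕ) : ℕ) : ℤ) := by push_cast; ring
          rw [hcast]
          rw [show ω i = v ⟨j + i, hij⟩ from dif_pos hij]
          simpa using hx'
        exact le_trans (measure_mono hincl) (le_of_eq (hinv' n j Ω hΩmeas))
      exact lt_of_lt_of_le hv (limsup_le_limsup (Eventually.of_forall hsub))
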